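/- For all real x and all real p ≥ 2, the series ∑_{n∈ℤ} |sinc(x - n)|^p converges and its sum is at most 1. -/

import Mathlib

open Real

noncomputable def sinc (x : ℝ) : ℝ := if x = 0 then 1 else Real.sin (π * x) / (π * x)

lemma csc_sq_double (θ : ℝ) (h1 : Real.sin θ ≠ 0) (h2 : Real.cos θ ≠ 0) :
    1 / Real.sin θ ^ 2 + 1 / Real.cos θ ^ 2 = 4 / Real.sin (2*θ) ^ 2 := by
  rw [Real.sin_two_mul]
  have h := Real.sin_sq_add_cos_sq θ
  field_simp
  nlinarith [h]

lemma sin_arg_ne_zero (x : ℝ) (hx : ∀ m : ℤ, x ≠ (m : ℝ)) (a j : ℕ) :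
    Real.sin (π * (x + j) / 2^a) ≠ 0 := by
  intro hs
  rw [Real.sin_eq_zero_iff] at hs
  obtain ⟨n, hn⟩ := hs
  apply hx (n * 2^a - j)
  have hπ := Real.pi_ne_zero
  have : π * (x + j) = π * ((n : ℝ) * 2^a) := by
    field_simp at hn
    rw [hn]
  have := mul_left_cancel₀ hπ this
  push_cast
  linarith

lemma key1 (x : ℝ) (hx : ∀ m : ℤ, x ≠ (m : ℝ)) : ∀ k : ℕ,
    ∑ j ∈ Finset.range (2^k), 1 / Real.sin (π * (x + j) / 2^k) ^ 2
      = (2^k : ℝ)^2 / Real.sin (π * x) ^ 2 := by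
  intro k
  induction k with
  | zero => simp
  | succ k ih =>
    have h2 : 2^(k+1) = 2^k + 2^k := by ring
    rw [h2, Finset.sum_range_add, ← Finset.sum_add_distrib]
    have hsin : ∀ j : ℕ, Real.sin (π * (x + j) / 2^(k+1)) ≠ 0 :=
      fun j => sin_arg_ne_zero x hx (k+1) j
    have hcos : ∀ j : ℕ, Real.cos (π * (x + j) / 2^(k+1)) ≠ 0 := by
      intro j hc
      rw [Real.cos_eq_zero_iff] at hc
      obtain ⟨n, hn⟩ := hc
      field_simp at hn
      apply hx ((2*n+1) * 2^k - j)
      have key : π * (x + (j:ℝ)) = π * (((2*n+1 : ℤ) : ℝ) * 2^k) := by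
        push_cast at hn ⊢
        linear_combination π * hn / 2
      have h2 := mul_left_cancel₀ Real.pi_ne_zero key
      push_cast at h2 ⊢
      linarith
    have step : ∀ j : ℕ,
        1 / Real.sin (π * (x + j) / 2^(k+1)) ^ 2
          + 1 / Real.sin (π * (x + ((2^k + j : ℕ) : ℝ)) / 2^(k+1)) ^ 2
        = 4 * (1 / Real.sin (π * (x + j) / 2^k) ^ 2) := by
      intro j
      have harg : π * (x + ((2^k + j : ℕ) : ℝ)) / 2^(k+1)
          = π * (x + j) / 2^(k+1) + π/2 := by
        push_cast
        field_simp
        ring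
      rw [harg, Real.sin_add_pi_div_two]
      have hd := csc_sq_double (π * (x + j) / 2^(k+1)) (hsin j) (hcos j)
      have harg2 : 2 * (π * (x + j) / 2^(k+1)) = π * (x + j) / 2^k := by
        field_simp
        ring
      rw [harg2] at hd
      rw [hd]
      ring
    calc ∑ j ∈ Finset.range (2^k),
          (1 / Real.sin (π * (x + j) / 2^(k+1)) ^ 2
            + 1 / Real.sin (π * (x + ((2^k + j : ℕ) : ℝ)) / 2^(k+1)) ^ 2)
        = ∑ j ∈ Finset.range (2^k), 4 * (1 / Real.sin (π * (x + j) / 2^k) ^ 2) :=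
          Finset.sum_congr rfl fun j _ => step j
      _ = 4 * ((2^k : ℝ)^2 / Real.sin (π * x) ^ 2) := by
          rw [← Finset.mul_sum, ih]
      _ = (2^(k+1) : ℝ)^2 / Real.sin (π * x) ^ 2 := by ring

lemma sin_pi_int_shift_sq (x : ℝ) (n : ℤ) :
    Real.sin (π * (x - n)) ^ 2 = Real.sin (π * x) ^ 2 := by
  have : π * (x - n) = π * x - n * π := by push_cast; ring
  rw [this, Real.sin_sub, Real.sin_int_mul_pi, mul_zero, sub_zero, mul_pow]
  have : Real.cos ((n:ℝ) * π) ^ 2 = 1 := by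
    rw [← sq_abs, Real.abs_cos_int_mul_pi, one_pow]
  rw [this, mul_one]

lemma sin_pi_ne_zero_of_ne_int (x : ℝ) (hx : ∀ m : ℤ, x ≠ (m : ℝ)) :
    Real.sin (π * x) ≠ 0 := by
  intro hs
  rw [Real.sin_eq_zero_iff] at hs
  obtain ⟨n, hn⟩ := hs
  apply hx n
  have := mul_left_cancel₀ Real.pi_ne_zero (show π * x = π * (n:ℝ) by linarith [hn])
  linarith

lemma key2 (x : ℝ) (hx : ∀ m : ℤ, x ≠ (m : ℝ)) (s : Finset ℤ) :
    ∑ n ∈ s, _root_.sinc (x - n) ^ 2 ≤ 1 := by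
  have hsx : Real.sin (π * x) ≠ 0 := sin_pi_ne_zero_of_ne_int x hx
  have hxn : ∀ n : ℤ, x - (n:ℝ) ≠ 0 := by
    intro n h
    exact hx n (by linarith [h])
  -- rewrite each term
  have hterm : ∀ n : ℤ, _root_.sinc (x - n) ^ 2
      = Real.sin (π * x) ^ 2 * (1 / (π * (x - n)) ^ 2) := by
    intro n
    rw [_root_.sinc, if_neg (hxn n), div_pow, sin_pi_int_shift_sq]
    field_simp
  rw [Finset.sum_congr rfl fun n _ => hterm n, ← Finset.mul_sum]
  -- window parameters
  set M : ℕ := s.sup (fun n => n.natAbs) with hM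
  have hMb : ∀ n ∈ s, n.natAbs ≤ M := fun n hn => Finset.le_sup hn
  set k : ℕ := 2*M+1 with hk
  have hkM : 2*M + 1 ≤ 2^k := (Nat.lt_two_pow_self (n := 2*M+1)).le
  set y : ℝ := x - M with hy
  have hyint : ∀ m : ℤ, y ≠ (m : ℝ) := by
    intro m h
    apply hx (m + M)
    push_cast
    rw [hy] at h
    linarith
  have hsy : Real.sin (π * y) ^ 2 = Real.sin (π * x) ^ 2 := by
    have : y = x - (M : ℤ) := by rw [hy]; push_cast; ring
    rw [this, sin_pi_int_shift_sq]
  -- compare the sum over s with the sum over the window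
  have hsub : ∑ n ∈ s, 1 / (π * (x - n)) ^ 2
      ≤ ∑ j ∈ Finset.range (2^k), 1 / (π * (y + j)) ^ 2 := by
    have hginj : Set.InjOn (fun n : ℤ => ((M : ℤ) - n).toNat) s := by
      intro a ha b hb hab
      have ha' := hMb a ha
      have hb' := hMb b hb
      simp only at hab
      omega
    rw [show ∑ n ∈ s, 1 / (π * (x - n)) ^ 2
        = ∑ j ∈ s.image (fun n : ℤ => ((M:ℤ) - n).toNat), 1 / (π * (y + j)) ^ 2 by
      rw [Finset.sum_image (fun a ha b hb h => hginj ha hb h)]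
      refine Finset.sum_congr rfl fun n hn => ?_
      have hn' : (0:ℤ) ≤ (M:ℤ) - n := by
        have := hMb n hn
        omega
      have : ((((M:ℤ) - n).toNat : ℤ) : ℝ) = (M:ℝ) - n := by
        rw [Int.toNat_of_nonneg hn']; push_cast; ring
      congr 2
      rw [hy]
      push_cast at this ⊢
      rw [show ((((M:ℤ) - n).toNat : ℕ) : ℝ) = (M:ℝ) - n from this]
      ring]
    apply Finset.sum_le_sum_of_subset_of_nonneg
    · intro j hj
      simp only [Finset.mem_image] at hj
      obtain ⟨n, hn, rfl⟩ := hj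
      rw [Finset.mem_range]
      have hlow := hMb n hn
      omega
    · intro j _ _
      positivity
  -- bound the window sum using key1
  have hwin : ∑ j ∈ Finset.range (2^k), 1 / (π * (y + j)) ^ 2
      ≤ 1 / Real.sin (π * x) ^ 2 := by
    have hA := key1 y hyint k
    have hterm2 : ∀ j ∈ Finset.range (2^k), 1 / (π * (y + j)) ^ 2
        ≤ ((2:ℝ)^k)⁻¹^2 * (1 / Real.sin (π * (y + j) / 2^k) ^ 2) := by
      intro j _
      have hsj := sin_arg_ne_zero y hyint k j
      have hpos : 0 < Real.sin (π * (y + j) / 2^k) ^ 2 := by positivity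
      have hle : Real.sin (π * (y + j) / 2^k) ^ 2 ≤ (π * (y + j) / 2^k) ^ 2 :=
        Real.sin_sq_le_sq
      have h1 : 1 / (π * (y + j) / 2^k) ^ 2 ≤ 1 / Real.sin (π * (y + j) / 2^k) ^ 2 :=
        one_div_le_one_div_of_le hpos hle
      have heq : ((2:ℝ)^k)⁻¹^2 * (1 / (π * (y + j) / 2^k) ^ 2) = 1 / (π * (y + j)) ^ 2 := by
        have hyj : y + (j:ℝ) ≠ 0 := by
          intro h
          exact hyint (-j) (by push_cast; linarith)
        have : π * (y + j) ≠ 0 := mul_ne_zero Real.pi_ne_zero hyj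
        field_simp
      calc 1 / (π * (y + j)) ^ 2
          = ((2:ℝ)^k)⁻¹^2 * (1 / (π * (y + j) / 2^k) ^ 2) := heq.symm
        _ ≤ ((2:ℝ)^k)⁻¹^2 * (1 / Real.sin (π * (y + j) / 2^k) ^ 2) := by
            apply mul_le_mul_of_nonneg_left h1 (by positivity)
    calc ∑ j ∈ Finset.range (2^k), 1 / (π * (y + j)) ^ 2
        ≤ ∑ j ∈ Finset.range (2^k),
            ((2:ℝ)^k)⁻¹^2 * (1 / Real.sin (π * (y + j) / 2^k) ^ 2) :=
          Finset.sum_le_sum hterm2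
      _ = ((2:ℝ)^k)⁻¹^2 * ((2^k : ℝ)^2 / Real.sin (π * y) ^ 2) := by
          rw [← Finset.mul_sum, hA]
      _ = 1 / Real.sin (π * x) ^ 2 := by
          rw [hsy]
          have h2k : ((2:ℝ)^k) ≠ 0 := by positivity
          field_simp
  calc Real.sin (π * x) ^ 2 * ∑ n ∈ s, 1 / (π * (x - n)) ^ 2
      ≤ Real.sin (π * x) ^ 2 * (1 / Real.sin (π * x) ^ 2) := by
        apply mul_le_mul_of_nonneg_left (le_trans hsub hwin) (by positivity)
    _ = 1 := by field_simp

lemma abs_sinc_le_one (t : ℝ) : |_root_.sinc t| ≤ 1 := by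
  rw [_root_.sinc]
  split_ifs with h
  · simp
  · rw [abs_div, div_le_one (abs_pos.mpr (mul_ne_zero Real.pi_ne_zero h))]
    exact Real.abs_sin_le_abs

theorem sinc_pow_sum_le_one (x p : ℝ) (hp : 2 ≤ p) :
    Summable (fun n : ℤ => |_root_.sinc (x - n)| ^ p) ∧
      (∑' n : ℤ, |_root_.sinc (x - n)| ^ p) ≤ 1 := by
  by_cases hx : ∃ m : ℤ, x = (m : ℝ)
  · obtain ⟨m, rfl⟩ := hx
    have hterm : ∀ n : ℤ, |_root_.sinc ((m:ℝ) - n)| ^ p = if n = m then 1 else 0 := by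
      intro n
      by_cases h : n = m
      · subst h
        simp [_root_.sinc, Real.one_rpow]
      · have hnm : ((m:ℝ) - n) ≠ 0 := by
          intro hh
          have hcast : (n:ℝ) = (m:ℝ) := by linarith
          exact h (by exact_mod_cast hcast)
        have hz : _root_.sinc ((m:ℝ) - n) = 0 := by
          rw [_root_.sinc, if_neg hnm]
          have : π * ((m:ℝ) - n) = ((m - n : ℤ):ℝ) * π := by push_cast; ring
          rw [this, Real.sin_int_mul_pi, zero_div]
        rw [if_neg h, hz, abs_zero, Real.zero_rpow (by linarith)]
    have h1 : HasSum (fun n : ℤ => if n = m then (1:ℝ) else 0) 1 := hasSum_ite_eq m 1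
    refine ⟨h1.summable.congr fun n => (hterm n).symm, ?_⟩
    rw [tsum_congr hterm, h1.tsum_eq]
  · push_neg at hx
    have hle : ∀ s : Finset ℤ, ∑ n ∈ s, |_root_.sinc (x - n)| ^ p ≤ 1 := by
      intro s
      have hterm : ∀ n ∈ s, |_root_.sinc (x - n)| ^ p ≤ _root_.sinc (x - n) ^ 2 := by
        intro n _
        have hne : _root_.sinc (x - n) ≠ 0 := by
          have hxn : x - (n:ℝ) ≠ 0 := by
            intro h; exact hx n (by linarith)
          rw [_root_.sinc, if_neg hxn]
          apply div_ne_zero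
          · exact sin_pi_ne_zero_of_ne_int (x - n)
              (fun m h => hx (m + n) (by push_cast; linarith))
          · exact mul_ne_zero Real.pi_ne_zero hxn
        have h0 : 0 < |_root_.sinc (x - n)| := abs_pos.mpr hne
        have h1 : |_root_.sinc (x - n)| ≤ 1 := abs_sinc_le_one _
        calc |_root_.sinc (x - n)| ^ p ≤ |_root_.sinc (x - n)| ^ (2:ℝ) :=
              Real.rpow_le_rpow_of_exponent_ge h0 h1 hp
          _ = _root_.sinc (x - n) ^ 2 := by
              rw [show ((2:ℝ) : ℝ) = ((2:ℕ) : ℝ) by norm_num, Real.rpow_natCast, sq_abs]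
      calc ∑ n ∈ s, |_root_.sinc (x - n)| ^ p ≤ ∑ n ∈ s, _root_.sinc (x - n) ^ 2 :=
            Finset.sum_le_sum hterm
        _ ≤ 1 := key2 x hx s
    have hnn : ∀ n : ℤ, 0 ≤ |_root_.sinc (x - n)| ^ p :=
      fun n => Real.rpow_nonneg (abs_nonneg _) p
    have hsum : Summable (fun n : ℤ => |_root_.sinc (x - n)| ^ p) :=
      summable_of_sum_le (fun n => hnn n) hle
    exact ⟨hsum, Summable.tsum_le_of_sum_le hsum hle⟩
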